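/- Let d ≥ 1 and let O_+ be the diagonal matrix indexed by a : Fin 3 → Fin d with diagonal entry (d+1)(d+2)·[a0 = a1 ∧ a1 = a2] − (d+1)·([a0 = a1] + [a1 = a2] + [a0 = a2]) + 2, where [·] is the 0/1 indicator. Then for every permutation π of Fin 3, Tr[O_+ · W_π] = Tr[(W_c + W_{c⁻¹}) · W_π], where c is the 3-cycle (0 1 2). (This is the trace-matching condition proving that the computational-basis post-processing O_+ reproduces the symmetrized cyclic operator M_+ = W_c + W_{c⁻¹} under twirling.) -/

import Mathlib

open Matrix

noncomputable section

/-- Permutation operator `W_π` of local index `I`: `W_π[b,a] = 1` iff `b = a ∘ π`. -/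
def permOp (I : Type*) [DecidableEq I] {t : ℕ} (π : Equiv.Perm (Fin t)) :
    Matrix (Fin t → I) (Fin t → I) ℂ :=
  Matrix.of fun b a => if b = a ∘ ⇑π then 1 else 0

/-- the 3-cycle (0 1 2) of `Fin 3` -/
def c3 : Equiv.Perm (Fin 3) := finRotate 3

/-- The post-processing observable `O₊`, diagonal in the computational basis. -/
def Oplus (d : ℕ) : Matrix (Fin 3 → Fin d) (Fin 3 → Fin d) ℂ :=
  Matrix.diagonal fun a =>
    ((d : ℂ) + 1) * ((d : ℂ) + 2) * (if a 0 = a 1 ∧ a 1 = a 2 then 1 else 0)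
      - ((d : ℂ) + 1) * ((if a 0 = a 1 then 1 else 0) + (if a 1 = a 2 then 1 else 0)
          + (if a 0 = a 2 then 1 else 0))
      + 2

set_option maxRecDepth 10000

lemma trace_diag_mul (d : ℕ) (f : (Fin 3 → Fin d) → ℂ) (π : Equiv.Perm (Fin 3)) :
    (Matrix.diagonal f * permOp (Fin d) π).trace
      = ∑ a : Fin 3 → Fin d, if a = a ∘ ⇑π then f a else 0 := by
  simp [Matrix.trace, Matrix.diag, Matrix.diagonal_mul, permOp, mul_ite, mul_one, mul_zero]

lemma trace_permOp_mul (d : ℕ) (σ π : Equiv.Perm (Fin 3)) :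
    (permOp (Fin d) σ * permOp (Fin d) π).trace
      = ∑ a : Fin 3 → Fin d, if a = a ∘ (⇑π ∘ ⇑σ) then (1:ℂ) else 0 := by
  simp only [Matrix.trace, Matrix.diag_apply, Matrix.mul_apply, permOp, Matrix.of_apply,
    ite_mul, one_mul, zero_mul]
  refine Finset.sum_congr rfl fun a _ => ?_
  rw [Finset.sum_eq_single (a ∘ ⇑π)]
  · simp [Function.comp_assoc]
  · intro b _ hb; simp [hb]
  · simp

def e3 (d : ℕ) : (Fin d × Fin d × Fin d) ≃ (Fin 3 → Fin d) where
  toFun p := ![p.1, p.2.1, p.2.2]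
  invFun a := (a 0, a 1, a 2)
  left_inv p := rfl
  right_inv a := by funext i; fin_cases i <;> rfl

lemma sum_reindex (d : ℕ) (F : (Fin 3 → Fin d) → ℂ) :
    ∑ a, F a = ∑ x, ∑ y, ∑ z, F ![x, y, z] := by
  rw [show (∑ x, ∑ y, ∑ z, F ![x, y, z]) = ∑ p : Fin d × Fin d × Fin d, F ![p.1, p.2.1, p.2.2] by
    rw [Fintype.sum_prod_type]; exact Finset.sum_congr rfl fun x _ => by rw [Fintype.sum_prod_type]]
  exact (Fintype.sum_equiv (e3 d) (fun p => F ![p.1, p.2.1, p.2.2]) F fun p => rfl).symm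

lemma cond_iff (d : ℕ) (a : Fin 3 → Fin d) (σ : Equiv.Perm (Fin 3)) :
    a = a ∘ ⇑σ ↔ (a 0 = a (σ 0) ∧ a 1 = a (σ 1) ∧ a 2 = a (σ 2)) := by
  rw [funext_iff]
  constructor
  · exact fun h => ⟨h 0, h 1, h 2⟩
  · rintro ⟨h0, h1, h2⟩ i; fin_cases i <;> assumption

lemma cond_one (d : ℕ) (a : Fin 3 → Fin d) :
    (a = a ∘ ⇑(1 : Equiv.Perm (Fin 3))) ↔ True := by
  simp [cond_iff]

lemma cond_c3 (d : ℕ) (a : Fin 3 → Fin d) :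
    (a = a ∘ ⇑c3) ↔ (a 0 = a 1 ∧ a 1 = a 2) := by
  rw [cond_iff, show c3 0 = 1 from rfl, show c3 1 = 2 from rfl, show c3 2 = 0 from rfl]
  exact ⟨fun ⟨h1, h2, _⟩ => ⟨h1, h2⟩, fun ⟨h1, h2⟩ => ⟨h1, h2, (h1.trans h2).symm⟩⟩

lemma cond_c3inv (d : ℕ) (a : Fin 3 → Fin d) :
    (a = a ∘ ⇑c3⁻¹) ↔ (a 0 = a 1 ∧ a 1 = a 2) := by
  rw [cond_iff, show c3⁻¹ 0 = 2 from rfl, show c3⁻¹ 1 = 0 from rfl, show c3⁻¹ 2 = 1 from rfl]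
  exact ⟨fun ⟨h1, h2, h3⟩ => ⟨h2.symm, h3.symm⟩,
    fun ⟨h1, h2⟩ => ⟨h1.trans h2, h1.symm, h2.symm⟩⟩

lemma cond_s01 (d : ℕ) (a : Fin 3 → Fin d) :
    (a = a ∘ ⇑(Equiv.swap (0 : Fin 3) 1)) ↔ a 0 = a 1 := by
  rw [cond_iff, show Equiv.swap (0 : Fin 3) 1 0 = 1 from rfl,
    show Equiv.swap (0 : Fin 3) 1 1 = 0 from rfl, show Equiv.swap (0 : Fin 3) 1 2 = 2 from rfl]
  exact ⟨fun ⟨h1, _, _⟩ => h1, fun h1 => ⟨h1, h1.symm, rfl⟩⟩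

lemma cond_s02 (d : ℕ) (a : Fin 3 → Fin d) :
    (a = a ∘ ⇑(Equiv.swap (0 : Fin 3) 2)) ↔ a 0 = a 2 := by
  rw [cond_iff, show Equiv.swap (0 : Fin 3) 2 0 = 2 from rfl,
    show Equiv.swap (0 : Fin 3) 2 1 = 1 from rfl, show Equiv.swap (0 : Fin 3) 2 2 = 0 from rfl]
  exact ⟨fun ⟨h1, _, _⟩ => h1, fun h1 => ⟨h1, rfl, h1.symm⟩⟩

lemma cond_s12 (d : ℕ) (a : Fin 3 → Fin d) :
    (a = a ∘ ⇑(Equiv.swap (1 : Fin 3) 2)) ↔ a 1 = a 2 := by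
  rw [cond_iff, show Equiv.swap (1 : Fin 3) 2 0 = 0 from rfl,
    show Equiv.swap (1 : Fin 3) 2 1 = 2 from rfl, show Equiv.swap (1 : Fin 3) 2 2 = 1 from rfl]
  exact ⟨fun ⟨_, h1, _⟩ => h1, fun h1 => ⟨rfl, h1, h1.symm⟩⟩

lemma vec3_0 {d : ℕ} (x y z : Fin d) : ![x, y, z] 0 = x := by simp

lemma vec3_1 {d : ℕ} (x y z : Fin d) : ![x, y, z] 1 = y := by simp

lemma vec3_2 {d : ℕ} (x y z : Fin d) : ![x, y, z] 2 = z := by simp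

theorem stmt_6 (d : ℕ) (hd : 1 ≤ d) (π : Equiv.Perm (Fin 3)) :
    (Oplus d * permOp (Fin d) π).trace =
      ((permOp (Fin d) c3 + permOp (Fin d) c3⁻¹) * permOp (Fin d) π).trace := by
  have hπ : π = 1 ∨ π = c3 ∨ π = c3⁻¹ ∨ π = Equiv.swap 0 1 ∨ π = Equiv.swap 0 2 ∨
      π = Equiv.swap 1 2 := by revert π; decide
  rw [Oplus, trace_diag_mul, Matrix.add_mul, Matrix.trace_add, trace_permOp_mul, trace_permOp_mul]
  simp only [← Equiv.Perm.coe_mul]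
  rcases hπ with h | h | h | h | h | h <;> subst h
  · simp only [show (1 : Equiv.Perm (Fin 3)) * c3 = c3 from by group,
      show (1 : Equiv.Perm (Fin 3)) * c3⁻¹ = c3⁻¹ from by group]
    simp only [cond_one, cond_c3, cond_c3inv, if_true]
    simp only [sum_reindex]
    simp only [vec3_0, vec3_1, vec3_2]
    simp [ite_and, Finset.sum_ite_eq, Finset.sum_ite_eq', Finset.card_univ,
      apply_ite (Finset.card), apply_ite (Nat.cast : ℕ → ℂ), Finset.sum_sub_distrib,
      Finset.sum_add_distrib, mul_ite, ite_mul, mul_one, mul_zero, Finset.sum_const]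
    try simp [Finset.sum_add_distrib, ← Finset.mul_sum, Finset.sum_ite_eq, Finset.sum_ite_eq',
      Finset.card_univ, apply_ite (Finset.card), apply_ite (Nat.cast : ℕ → ℂ), Finset.sum_const]
    ring
  · simp only [show c3 * c3 = c3⁻¹ from by decide, show c3 * c3⁻¹ = 1 from by group]
    simp only [cond_one, cond_c3, cond_c3inv, if_true]
    simp only [sum_reindex]
    simp only [vec3_0, vec3_1, vec3_2]
    simp [ite_and, Finset.sum_ite_eq, Finset.sum_ite_eq', Finset.card_univ,
      apply_ite (Finset.card), apply_ite (Nat.cast : ℕ → ℂ), Finset.sum_sub_distrib,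
      Finset.sum_add_distrib, mul_ite, ite_mul, mul_one, mul_zero, Finset.sum_const]
    try simp [Finset.sum_add_distrib, ← Finset.mul_sum, Finset.sum_ite_eq, Finset.sum_ite_eq',
      Finset.card_univ, apply_ite (Finset.card), apply_ite (Nat.cast : ℕ → ℂ), Finset.sum_const]
    ring
  · simp only [show c3⁻¹ * c3 = 1 from by group, show c3⁻¹ * c3⁻¹ = c3 from by decide]
    simp only [cond_one, cond_c3, cond_c3inv, if_true]
    simp only [sum_reindex]
    simp only [vec3_0, vec3_1, vec3_2]
    simp [ite_and, Finset.sum_ite_eq, Finset.sum_ite_eq', Finset.card_univ,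
      apply_ite (Finset.card), apply_ite (Nat.cast : ℕ → ℂ), Finset.sum_sub_distrib,
      Finset.sum_add_distrib, mul_ite, ite_mul, mul_one, mul_zero, Finset.sum_const]
    try simp [Finset.sum_add_distrib, ← Finset.mul_sum, Finset.sum_ite_eq, Finset.sum_ite_eq',
      Finset.card_univ, apply_ite (Finset.card), apply_ite (Nat.cast : ℕ → ℂ), Finset.sum_const]
    ring
  · simp only [show Equiv.swap (0 : Fin 3) 1 * c3 = Equiv.swap 1 2 from by decide,
      show Equiv.swap (0 : Fin 3) 1 * c3⁻¹ = Equiv.swap 0 2 from by decide]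
    simp only [cond_s01, cond_s02, cond_s12]
    simp only [sum_reindex]
    simp only [vec3_0, vec3_1, vec3_2]
    simp [ite_and, Finset.sum_ite_eq, Finset.sum_ite_eq', Finset.card_univ,
      apply_ite (Finset.card), apply_ite (Nat.cast : ℕ → ℂ), Finset.sum_sub_distrib,
      Finset.sum_add_distrib, mul_ite, ite_mul, mul_one, mul_zero, Finset.sum_const]
    try simp [Finset.sum_add_distrib, ← Finset.mul_sum, Finset.sum_ite_eq, Finset.sum_ite_eq',
      Finset.card_univ, apply_ite (Finset.card), apply_ite (Nat.cast : ℕ → ℂ), Finset.sum_const]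
    ring
  · simp only [show Equiv.swap (0 : Fin 3) 2 * c3 = Equiv.swap 0 1 from by decide,
      show Equiv.swap (0 : Fin 3) 2 * c3⁻¹ = Equiv.swap 1 2 from by decide]
    simp only [cond_s01, cond_s02, cond_s12]
    simp only [sum_reindex]
    simp only [vec3_0, vec3_1, vec3_2]
    simp [ite_and, Finset.sum_ite_eq, Finset.sum_ite_eq', Finset.card_univ,
      apply_ite (Finset.card), apply_ite (Nat.cast : ℕ → ℂ), Finset.sum_sub_distrib,
      Finset.sum_add_distrib, mul_ite, ite_mul, mul_one, mul_zero, Finset.sum_const]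
    try simp [Finset.sum_add_distrib, ← Finset.mul_sum, Finset.sum_ite_eq, Finset.sum_ite_eq',
      Finset.card_univ, apply_ite (Finset.card), apply_ite (Nat.cast : ℕ → ℂ), Finset.sum_const]
    ring
  · simp only [show Equiv.swap (1 : Fin 3) 2 * c3 = Equiv.swap 0 2 from by decide,
      show Equiv.swap (1 : Fin 3) 2 * c3⁻¹ = Equiv.swap 0 1 from by decide]
    simp only [cond_s01, cond_s02, cond_s12]
    simp only [sum_reindex]
    simp only [vec3_0, vec3_1, vec3_2]
    simp [ite_and, Finset.sum_ite_eq, Finset.sum_ite_eq', Finset.card_univ,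
      apply_ite (Finset.card), apply_ite (Nat.cast : ℕ → ℂ), Finset.sum_sub_distrib,
      Finset.sum_add_distrib, mul_ite, ite_mul, mul_one, mul_zero, Finset.sum_const]
    try simp [Finset.sum_add_distrib, ← Finset.mul_sum, Finset.sum_ite_eq, Finset.sum_ite_eq',
      Finset.card_univ, apply_ite (Finset.card), apply_ite (Nat.cast : ℕ → ℂ), Finset.sum_const]
    ring
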